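/- Let X be a compactum and R ⊆ X a nonempty closed subset. Then the set A = {μ ∈ M_∪X : μ(X ∖ R) = 0} of possibility capacities supported in R equals [μ₀X, ν_R] ∩ M_∪X, where μ₀X is the least capacity (μ₀X(A)=0 for A ≠ X, μ₀X(X)=1) and ν_R is the possibility capacity with ν_R(A) = 1 if A ∩ R ≠ ∅ and ν_R(A) = 0 otherwise; in particular A is a closed subset of M_∪X and an element of the convexity C_{∪X}. -/

import Mathlib

open Set TopologicalSpace

universe u v

/-- A (upper-semicontinuous) capacity on a topological space `X`:
a normalized monotone set function on the closed subsets, upper semicontinuous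
in the sense of Zarichnyi–Nykyforchyn. -/
structure Capacity (X : Type u) [TopologicalSpace X] : Type u where
  toFun : Closeds X → ℝ
  empty' : toFun ⊥ = 0
  univ' : toFun ⊤ = 1
  mono' : ∀ F G : Closeds X, F ≤ G → toFun F ≤ toFun G
  usc' : ∀ (F : Closeds X) (a : ℝ), toFun F < a →
    ∃ O : Set X, IsOpen O ∧ (F : Set X) ⊆ O ∧ ∀ B : Closeds X, (B : Set X) ⊆ O → toFun B < a

namespace Capacity

variable {X : Type u} [TopologicalSpace X]

/-- Value of a capacity on (the closure of) an arbitrary set; on closed sets this is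
the value of the capacity. -/
def cval (ν : Capacity X) (A : Set X) : ℝ := ν.toFun ⟨closure A, isClosed_closure⟩

/-- The sup-extension of a capacity to open sets:
`ν(U) = sup {ν K : K closed, K ⊆ U}`. -/
noncomputable def oval (ν : Capacity X) (U : Set X) : ℝ :=
  sSup {r : ℝ | ∃ K : Closeds X, (K : Set X) ⊆ U ∧ ν.toFun K = r}

end Capacity

/-- The topology on the space `MX` of capacities, generated by the subbase
`O₋(F,a) = {c : c(F) < a}` (`F` closed) and `O₊(U,a) = {c : c(U) > a}` (`U` open). -/
instance capacityTopology (X : Type u) [TopologicalSpace X] : TopologicalSpace (Capacity X) :=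
  TopologicalSpace.generateFrom
    ({S | ∃ (F : Closeds X) (a : ℝ), a ∈ Icc (0:ℝ) 1 ∧
        S = {c : Capacity X | c.toFun F < a}} ∪
     {S | ∃ U : Set X, IsOpen U ∧ ∃ a ∈ Icc (0:ℝ) 1,
        S = {c : Capacity X | a < c.oval U}})

/-- A possibility capacity: `ν(A ∪ B) = max (ν A) (ν B)` on closed sets. -/
def IsPossibility {X : Type u} [TopologicalSpace X] (ν : Capacity X) : Prop :=
  ∀ A B : Closeds X, ν.toFun (A ⊔ B) = max (ν.toFun A) (ν.toFun B)

/-- A necessity capacity: `ν(A ∩ B) = min (ν A) (ν B)` on closed sets. -/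
def IsNecessity {X : Type u} [TopologicalSpace X] (ν : Capacity X) : Prop :=
  ∀ A B : Closeds X, ν.toFun (A ⊓ B) = min (ν.toFun A) (ν.toFun B)

/-- A triangular norm on `[0,1]`. -/
structure Tnorm : Type where
  toFun : ℝ → ℝ → ℝ
  mem' : ∀ s ∈ Icc (0:ℝ) 1, ∀ t ∈ Icc (0:ℝ) 1, toFun s t ∈ Icc (0:ℝ) 1
  comm' : ∀ s ∈ Icc (0:ℝ) 1, ∀ t ∈ Icc (0:ℝ) 1, toFun s t = toFun t s
  assoc' : ∀ s ∈ Icc (0:ℝ) 1, ∀ t ∈ Icc (0:ℝ) 1, ∀ r ∈ Icc (0:ℝ) 1,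
    toFun (toFun s t) r = toFun s (toFun t r)
  mono' : ∀ s₁ ∈ Icc (0:ℝ) 1, ∀ s₂ ∈ Icc (0:ℝ) 1, ∀ t₁ ∈ Icc (0:ℝ) 1, ∀ t₂ ∈ Icc (0:ℝ) 1,
    s₁ ≤ s₂ → t₁ ≤ t₂ → toFun s₁ t₁ ≤ toFun s₂ t₂
  one' : ∀ s ∈ Icc (0:ℝ) 1, toFun s 1 = s

/-- Continuity of a t-norm (on the unit square). -/
def Tnorm.Cont (star : Tnorm) : Prop :=
  ContinuousOn (fun q : ℝ × ℝ => star.toFun q.1 q.2) (Icc 0 1 ×ˢ Icc 0 1)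

/-- The t-normed (fuzzy) integral `∫^{∨∗} f dν = sup { ν(f⁻¹[t,1]) ∗ t : t ∈ [0,1] }`. -/
noncomputable def tInt {X : Type u} [TopologicalSpace X] (star : Tnorm) (ν : Capacity X) (f : X → ℝ) : ℝ :=
  sSup {r : ℝ | ∃ t ∈ Icc (0:ℝ) 1, r = star.toFun (ν.cval (f ⁻¹' Icc t 1)) t}
/-- The convexity `C_{∪X}` on the space `M_∪X` of possibility capacities: a set `A` of
possibility capacities belongs to it iff it is empty, or it is nonempty, closed and
equals `[⋀A, ⋁A] ∩ M_∪X` (pointwise order interval between the pointwise infimum and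
supremum of `A`). -/
def InConvexU {X : Type u} [TopologicalSpace X] (A : Set (Capacity X)) : Prop :=
  A = ∅ ∨ (A.Nonempty ∧ IsClosed A ∧ (∀ ν ∈ A, IsPossibility ν) ∧
    A = {α : Capacity X | IsPossibility α ∧ ∀ F : Closeds X,
      sInf ((fun ν : Capacity X => ν.toFun F) '' A) ≤ α.toFun F ∧
      α.toFun F ≤ sSup ((fun ν : Capacity X => ν.toFun F) '' A)})
section Aux
variable {X : Type u} [TopologicalSpace X]

lemma cap_nonneg (ν : Capacity X) (F : Closeds X) : 0 ≤ ν.toFun F := by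
  have := ν.mono' ⊥ F bot_le; rwa [ν.empty'] at this

lemma cap_le_one (ν : Capacity X) (F : Closeds X) : ν.toFun F ≤ 1 := by
  have := ν.mono' F ⊤ le_top; rwa [ν.univ'] at this

lemma cap_cval (ν : Capacity X) {F : Set X} (h : IsClosed F) :
    ν.cval F = ν.toFun ⟨F, h⟩ :=
  congrArg ν.toFun (Closeds.ext (by simpa using h.closure_eq))

lemma cap_cval' (ν : Capacity X) (F : Closeds X) : ν.cval ↑F = ν.toFun F :=
  (cap_cval ν F.isClosed).trans rfl

lemma oval_bddAbove (ν : Capacity X) (U : Set X) :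
    BddAbove {r : ℝ | ∃ K : Closeds X, (K : Set X) ⊆ U ∧ ν.toFun K = r} :=
  ⟨1, by rintro r ⟨K, -, rfl⟩; exact cap_le_one ν K⟩

lemma oval_nonempty (ν : Capacity X) (U : Set X) :
    {r : ℝ | ∃ K : Closeds X, (K : Set X) ⊆ U ∧ ν.toFun K = r}.Nonempty :=
  ⟨0, ⊥, by simp, ν.empty'⟩

lemma toFun_le_oval (ν : Capacity X) {U : Set X} (K : Closeds X) (h : (K:Set X) ⊆ U) :
    ν.toFun K ≤ ν.oval U :=
  le_csSup (oval_bddAbove ν U) ⟨K, h, rfl⟩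

lemma oval_nonneg (ν : Capacity X) (U : Set X) : 0 ≤ ν.oval U :=
  le_csSup (oval_bddAbove ν U) ⟨⊥, by simp, ν.empty'⟩

lemma oval_zero_iff (ν : Capacity X) (U : Set X) :
    ν.oval U = 0 ↔ ∀ K : Closeds X, (K:Set X) ⊆ U → ν.toFun K = 0 := by
  constructor
  · intro h K hK
    have h1 := toFun_le_oval ν K hK
    rw [h] at h1
    exact le_antisymm h1 (cap_nonneg ν K)
  · intro h
    refine le_antisymm (csSup_le (oval_nonempty ν U) ?_) (oval_nonneg ν U)
    rintro r ⟨K, hK, rfl⟩; exact (h K hK).le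

end Aux

section Main
variable {X : Type u} [TopologicalSpace X]

lemma closed_supported (X : Type u) [TopologicalSpace X] [CompactSpace X] [T2Space X]
    (R : Set X) (hR : IsClosed R) :
    IsClosed {μ : Capacity X | IsPossibility μ ∧ μ.oval Rᶜ = 0} := by
  rw [← isOpen_compl_iff, isOpen_iff_forall_mem_open]
  intro c hc
  rw [mem_compl_iff, mem_setOf_eq] at hc
  by_cases hpos : IsPossibility c
  · have hne : c.oval Rᶜ ≠ 0 := fun h => hc ⟨hpos, h⟩
    have h0 : 0 < c.oval Rᶜ := lt_of_le_of_ne (oval_nonneg c Rᶜ) (Ne.symm hne)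
    refine ⟨{c' : Capacity X | 0 < c'.oval Rᶜ}, ?_, ?_, h0⟩
    · intro c' hc'
      simp only [mem_compl_iff, mem_setOf_eq]
      rintro ⟨-, h⟩
      rw [mem_setOf_eq, h] at hc'
      exact lt_irrefl 0 hc'
    · exact TopologicalSpace.isOpen_generateFrom_of_mem
        (Or.inr ⟨Rᶜ, hR.isOpen_compl, 0, ⟨le_refl 0, zero_le_one⟩, rfl⟩)
  · simp only [IsPossibility, not_forall] at hpos
    obtain ⟨A, B, hAB⟩ := hpos
    have hmax : max (c.toFun A) (c.toFun B) < c.toFun (A ⊔ B) :=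
      lt_of_le_of_ne (max_le (c.mono' A _ le_sup_left) (c.mono' B _ le_sup_right)) (Ne.symm hAB)
    set a := (max (c.toFun A) (c.toFun B) + c.toFun (A ⊔ B)) / 2 with ha
    have ha1 : max (c.toFun A) (c.toFun B) < a := by rw [ha]; linarith
    have ha2 : a < c.toFun (A ⊔ B) := by rw [ha]; linarith
    have haI : a ∈ Icc (0:ℝ) 1 :=
      ⟨le_trans (le_trans (cap_nonneg c A) (le_max_left _ _)) ha1.le,
       ha2.le.trans (cap_le_one c _)⟩
    obtain ⟨OA, hOAo, hAO, hOA⟩ := c.usc' A a (lt_of_le_of_lt (le_max_left _ _) ha1)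
    obtain ⟨OB, hOBo, hBO, hOB⟩ := c.usc' B a (lt_of_le_of_lt (le_max_right _ _) ha1)
    obtain ⟨VA, hVAo, hAV, hVAc⟩ := normal_exists_closure_subset A.isClosed hOAo hAO
    obtain ⟨VB, hVBo, hBV, hVBc⟩ := normal_exists_closure_subset B.isClosed hOBo hBO
    set FA : Closeds X := ⟨closure VA, isClosed_closure⟩ with hFA
    set FB : Closeds X := ⟨closure VB, isClosed_closure⟩ with hFB
    refine ⟨{c' : Capacity X | c'.toFun FA < a} ∩ {c' : Capacity X | c'.toFun FB < a} ∩
        {c' : Capacity X | a < c'.oval (VA ∪ VB)}, ?_, ?_, ?_⟩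
    · rintro c' ⟨⟨h1, h2⟩, h3⟩
      simp only [mem_setOf_eq] at h1 h2 h3
      simp only [mem_compl_iff, mem_setOf_eq]
      rintro ⟨hp', -⟩
      obtain ⟨r, ⟨K, hKU, rfl⟩, hr⟩ := exists_lt_of_lt_csSup (oval_nonempty c' (VA ∪ VB)) h3
      have hKeq : K = (K ⊓ FA) ⊔ (K ⊓ FB) := by
        apply Closeds.ext
        simp only [Closeds.coe_sup, Closeds.coe_inf, hFA, hFB]
        rw [← inter_union_distrib_left]
        exact (inter_eq_left.mpr (hKU.trans
          (union_subset_union subset_closure subset_closure))).symm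
      have h4 : c'.toFun K = max (c'.toFun (K ⊓ FA)) (c'.toFun (K ⊓ FB)) := by
        rw [congrArg c'.toFun hKeq]; exact hp' _ _
      have h5 : c'.toFun (K ⊓ FA) ≤ c'.toFun FA := c'.mono' _ _ inf_le_right
      have h6 : c'.toFun (K ⊓ FB) ≤ c'.toFun FB := c'.mono' _ _ inf_le_right
      rw [h4] at hr
      rcases max_cases (c'.toFun (K ⊓ FA)) (c'.toFun (K ⊓ FB)) with ⟨he, -⟩ | ⟨he, -⟩ <;>
        rw [he] at hr <;> linarith
    · refine IsOpen.inter (IsOpen.inter ?_ ?_) ?_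
      · exact TopologicalSpace.isOpen_generateFrom_of_mem (Or.inl ⟨FA, a, haI, rfl⟩)
      · exact TopologicalSpace.isOpen_generateFrom_of_mem (Or.inl ⟨FB, a, haI, rfl⟩)
      · exact TopologicalSpace.isOpen_generateFrom_of_mem
          (Or.inr ⟨VA ∪ VB, hVAo.union hVBo, a, haI, rfl⟩)
    · refine ⟨⟨hOA FA hVAc, hOB FB hVBc⟩, ?_⟩
      simp only [mem_setOf_eq]
      refine lt_of_lt_of_le ha2 (toFun_le_oval c (A ⊔ B) ?_)
      rw [Closeds.coe_sup]
      exact union_subset_union hAV hBV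

end Main

/-- for a nonempty closed `R ⊆ X`, the set
`A = {μ ∈ M_∪X : μ(X ∖ R) = 0}` of possibility capacities supported in `R` equals
`[μ₀X, ν_R] ∩ M_∪X`, where `μ₀X` is the least capacity and `ν_R(A) = 1` iff `A` meets
`R`; in particular `A` is closed and belongs to the convexity `C_{∪X}`. -/
theorem supported_capacities_convex (X : Type u) [TopologicalSpace X]
    [CompactSpace X] [T2Space X]
    (R : Set X) (hR : IsClosed R) (hRne : R.Nonempty)
    (μ₀ : Capacity X)
    (hμ₀ : ∀ F : Set X, IsClosed F → F ≠ Set.univ → μ₀.cval F = 0)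
    (νR : Capacity X)
    (hνR : ∀ F : Set X, IsClosed F →
      ((F ∩ R).Nonempty → νR.cval F = 1) ∧ (F ∩ R = ∅ → νR.cval F = 0)) :
    {μ : Capacity X | IsPossibility μ ∧ μ.oval Rᶜ = 0} =
      {α : Capacity X | IsPossibility α ∧ ∀ F : Closeds X,
        min (μ₀.toFun F) (νR.toFun F) ≤ α.toFun F ∧
        α.toFun F ≤ max (μ₀.toFun F) (νR.toFun F)} ∧
    IsClosed {μ : Capacity X | IsPossibility μ ∧ μ.oval Rᶜ = 0} ∧
    InConvexU {μ : Capacity X | IsPossibility μ ∧ μ.oval Rᶜ = 0} := by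
  classical
  have hsub : ∀ K : Closeds X, ((K:Set X) ⊆ Rᶜ ↔ (↑K ∩ R : Set X) = ∅) := by
    intro K
    rw [subset_compl_iff_disjoint_right, disjoint_iff_inter_eq_empty]
  have hνR1 : ∀ F : Closeds X, ((F:Set X) ∩ R).Nonempty → νR.toFun F = 1 := by
    intro F h
    have := (hνR ↑F F.isClosed).1 h
    rwa [cap_cval' νR F] at this
  have hνR0 : ∀ F : Closeds X, ((F:Set X) ∩ R) = ∅ → νR.toFun F = 0 := by
    intro F h
    have := (hνR ↑F F.isClosed).2 h
    rwa [cap_cval' νR F] at this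
  have hμ₀0 : ∀ F : Closeds X, (F:Set X) ≠ univ → μ₀.toFun F = 0 := by
    intro F h
    have := hμ₀ ↑F F.isClosed h
    rwa [cap_cval' μ₀ F] at this
  have hνRposs : IsPossibility νR := by
    intro A B
    have hcoe : ((A ⊔ B : Closeds X) : Set X) ∩ R = ((A:Set X) ∩ R) ∪ ((B:Set X) ∩ R) := by
      rw [Closeds.coe_sup, union_inter_distrib_right]
    rcases eq_empty_or_nonempty ((A:Set X) ∩ R) with hA | hA <;>
      rcases eq_empty_or_nonempty ((B:Set X) ∩ R) with hB | hB
    · rw [hνR0 A hA, hνR0 B hB, hνR0 (A ⊔ B) (by rw [hcoe, hA, hB, union_empty])]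
      simp
    · rw [hνR0 A hA, hνR1 B hB, hνR1 (A ⊔ B) (by rw [hcoe]; exact hB.mono subset_union_right)]
      simp
    · rw [hνR1 A hA, hνR0 B hB, hνR1 (A ⊔ B) (by rw [hcoe]; exact hA.mono subset_union_left)]
      simp
    · rw [hνR1 A hA, hνR1 B hB, hνR1 (A ⊔ B) (by rw [hcoe]; exact hA.mono subset_union_left)]
      simp
  have hνRsupp : νR.oval Rᶜ = 0 :=
    (oval_zero_iff νR Rᶜ).mpr fun K hK => hνR0 K ((hsub K).mp hK)
  have heq : {μ : Capacity X | IsPossibility μ ∧ μ.oval Rᶜ = 0} =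
      {α : Capacity X | IsPossibility α ∧ ∀ F : Closeds X,
        min (μ₀.toFun F) (νR.toFun F) ≤ α.toFun F ∧
        α.toFun F ≤ max (μ₀.toFun F) (νR.toFun F)} := by
    ext μ
    simp only [mem_setOf_eq]
    constructor
    · rintro ⟨hp, hs⟩
      refine ⟨hp, fun F => ?_⟩
      by_cases hF : (F:Set X) = univ
      · have hFtop : F = ⊤ := Closeds.ext (by simpa using hF)
        have h2 : νR.toFun F = 1 := hνR1 F (by rw [hF, univ_inter]; exact hRne)
        rw [hFtop] at h2 ⊢
        rw [μ.univ', μ₀.univ', h2]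
        norm_num
      · have h1 : μ₀.toFun F = 0 := hμ₀0 F hF
        refine ⟨by rw [h1]; exact le_trans (min_le_left _ _) (cap_nonneg μ F), ?_⟩
        rcases eq_empty_or_nonempty ((F:Set X) ∩ R) with h | h
        · have hμF : μ.toFun F = 0 := (oval_zero_iff μ Rᶜ).mp hs F ((hsub F).mpr h)
          rw [hμF]
          exact le_max_of_le_left (cap_nonneg μ₀ F)
        · have h2 : νR.toFun F = 1 := hνR1 F h
          rw [h2]
          exact le_max_of_le_right (cap_le_one μ F)
    · rintro ⟨hp, hb⟩
      refine ⟨hp, (oval_zero_iff μ Rᶜ).mpr fun K hK => ?_⟩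
      have hKe : (↑K ∩ R : Set X) = ∅ := (hsub K).mp hK
      have hKne : (K:Set X) ≠ univ := by
        intro h
        rw [h, univ_inter] at hKe
        exact hRne.ne_empty hKe
      have h1 : μ₀.toFun K = 0 := hμ₀0 K hKne
      have h2 : νR.toFun K = 0 := hνR0 K hKe
      have h3 := (hb K).2
      rw [h1, h2, max_self] at h3
      exact le_antisymm h3 (cap_nonneg μ K)
  have hcl := closed_supported X R hR
  refine ⟨heq, hcl, Or.inr ⟨⟨νR, hνRposs, hνRsupp⟩, hcl, fun ν hν => hν.1, ?_⟩⟩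
  ext α
  simp only [mem_setOf_eq]
  constructor
  · rintro ⟨hp, hs⟩
    refine ⟨hp, fun F => ?_⟩
    have hmem : α.toFun F ∈ (fun ν : Capacity X => ν.toFun F) ''
        {μ : Capacity X | IsPossibility μ ∧ μ.oval Rᶜ = 0} := ⟨α, ⟨hp, hs⟩, rfl⟩
    exact ⟨csInf_le ⟨0, by rintro r ⟨ν, -, rfl⟩; exact cap_nonneg ν F⟩ hmem,
      le_csSup ⟨1, by rintro r ⟨ν, -, rfl⟩; exact cap_le_one ν F⟩ hmem⟩
  · rintro ⟨hp, hb⟩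
    refine ⟨hp, (oval_zero_iff α Rᶜ).mpr fun K hK => ?_⟩
    have h2 := (hb K).2
    have himg : (fun ν : Capacity X => ν.toFun K) ''
        {μ : Capacity X | IsPossibility μ ∧ μ.oval Rᶜ = 0} = {0} := by
      apply Subset.antisymm
      · rintro r ⟨ν, ⟨-, hνs⟩, rfl⟩
        exact (oval_zero_iff ν Rᶜ).mp hνs K hK
      · rintro r hr
        rw [mem_singleton_iff] at hr
        exact ⟨νR, ⟨hνRposs, hνRsupp⟩, by rw [hr]; exact hνR0 K ((hsub K).mp hK)⟩
    rw [himg, csSup_singleton] at h2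
    exact le_antisymm h2 (cap_nonneg α K)
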